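/- Rockafellar–Uryasev representation of CVaR: for every integrable real-valued random variable X on a probability space and every confidence level γ ∈ (0,1), CVaR_γ(X) = min_{α ∈ ℝ} ( α + (1/(1−γ)) · E[ max(−X − α, 0) ] ), and the minimum over α ∈ ℝ is attained. -/

import Mathlib

open MeasureTheory

namespace RUaux

open Set ENNReal
set_option linter.unusedSectionVars false
set_option linter.unusedVariables false

variable {Ω : Type*} [MeasurableSpace Ω] (P : Measure Ω) (L : Ω → ℝ)

/-- Tail probability of the loss `L`. -/
noncomputable def G (t : ℝ) : ℝ≥0∞ := P {ω | t < L ω}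

/-- Lower quantile of the loss `L`. -/
noncomputable def q (β : ℝ) : ℝ := sInf {x : ℝ | G P L x ≤ ENNReal.ofReal (1 - β)}

variable [IsProbabilityMeasure P]

lemma G_antitone : Antitone (G P L) := fun s t hst =>
  measure_mono (fun ω (hω : t < L ω) => lt_of_le_of_lt hst hω)

lemma G_ne_top (t : ℝ) : G P L t ≠ ⊤ := measure_ne_top P _

/-- Right continuity in the form needed: `G` at a point is the sup of values to the right. -/
lemma G_le_of_forall_lt {t : ℝ} {c : ℝ≥0∞} (h : ∀ ε : ℝ, 0 < ε → G P L (t + ε) ≤ c) :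
    G P L t ≤ c := by
  have hU : {ω | t < L ω} = ⋃ n : ℕ, {ω | t + 1/(n+1) < L ω} := by
    ext ω
    simp only [mem_setOf_eq, mem_iUnion]
    constructor
    · intro h
      obtain ⟨n, hn⟩ := exists_nat_one_div_lt (sub_pos.mpr h)
      exact ⟨n, by linarith [hn]⟩
    · rintro ⟨n, hn⟩
      have : (0:ℝ) < 1/(n+1) := by positivity
      linarith
  have hmono : Monotone (fun n : ℕ => {ω | t + 1/(n+1) < L ω}) := by
    intro m n hmn ω (hω : t + 1/(m+1) < L ω)
    have h1 : (1:ℝ)/(n+1) ≤ 1/(m+1) := by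
      apply one_div_le_one_div_of_le (by positivity)
      exact_mod_cast by omega
    exact lt_of_le_of_lt (by linarith) hω
  have := hmono.measure_iUnion (μ := P)
  rw [show G P L t = P (⋃ n : ℕ, {ω | t + 1/(n+1) < L ω}) from by rw [G, hU], this]
  exact iSup_le fun n => h _ (by positivity)


lemma S_nonempty (hL : AEMeasurable L P) (hβ : β < 1) :
    {x : ℝ | G P L x ≤ ENNReal.ofReal (1 - β)}.Nonempty := by
  by_contra h
  rw [not_nonempty_iff_eq_empty] at h
  have hanti : Antitone (fun n : ℕ => {ω | (n:ℝ) < L ω}) := by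
    intro m n hmn ω (hω : (n:ℝ) < L ω)
    exact lt_of_le_of_lt (by exact_mod_cast hmn) hω
  have hiInt : (⋂ n : ℕ, {ω | (n:ℝ) < L ω}) = (∅ : Set Ω) := by
    ext ω; simp only [mem_iInter, mem_setOf_eq, mem_empty_iff_false, iff_false, not_forall, not_lt]
    obtain ⟨n, hn⟩ := exists_nat_ge (L ω)
    exact ⟨n, hn⟩
  have hmeas : ∀ n : ℕ, NullMeasurableSet {ω | (n:ℝ) < L ω} P := fun n =>
    nullMeasurableSet_lt aemeasurable_const hL
  have hinf := hanti.measure_iInter hmeas ⟨0, measure_ne_top P _⟩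
  rw [hiInt, measure_empty] at hinf
  have hpos : (0:ℝ≥0∞) < ENNReal.ofReal (1 - β) := by
    rw [ENNReal.ofReal_pos]; linarith
  have : ∃ n : ℕ, G P L (n : ℝ) < ENNReal.ofReal (1 - β) := by
    have := hinf ▸ hpos
    exact iInf_lt_iff.mp this
  obtain ⟨n, hn⟩ := this
  exact Set.eq_empty_iff_forall_notMem.mp h (n:ℝ) hn.le

lemma S_bddBelow (hβ : 0 < β) :
    BddBelow {x : ℝ | G P L x ≤ ENNReal.ofReal (1 - β)} := by
  have hmono : Monotone (fun n : ℕ => {ω | -(n:ℝ) < L ω}) := by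
    intro m n hmn ω (hω : -(m:ℝ) < L ω)
    have : -(n:ℝ) ≤ -(m:ℝ) := by exact_mod_cast neg_le_neg (by exact_mod_cast hmn)
    exact lt_of_le_of_lt this hω
  have hU : (⋃ n : ℕ, {ω | -(n:ℝ) < L ω}) = univ := by
    ext ω; simp only [mem_iUnion, mem_setOf_eq, mem_univ, iff_true]
    obtain ⟨n, hn⟩ := exists_nat_gt (-L ω)
    exact ⟨n, by linarith⟩
  have h1 := hmono.measure_iUnion (μ := P)
  rw [hU, measure_univ] at h1
  have hlt : ENNReal.ofReal (1 - β) < 1 := ENNReal.ofReal_lt_one.mpr (by linarith)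
  rw [h1] at hlt
  obtain ⟨n, hn⟩ := lt_iSup_iff.mp hlt
  refine ⟨-(n:ℝ), fun x hx => ?_⟩
  by_contra hc
  push_neg at hc
  exact absurd (le_trans ((G_antitone P L) hc.le) hx) (not_le.mpr hn)

/-- Galois connection: for `β ∈ (0,1)`, `q β ≤ t ↔ G t ≤ 1 - β`. -/
lemma q_le_iff (hL : AEMeasurable L P) (hβ0 : 0 < β) (hβ1 : β < 1) (t : ℝ) :
    q P L β ≤ t ↔ G P L t ≤ ENNReal.ofReal (1 - β) := by
  constructor
  · intro h
    refine le_trans ((G_antitone P L) h) (G_le_of_forall_lt P L fun ε hε => ?_)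
    obtain ⟨x, hx, hxlt⟩ := (csInf_lt_iff (S_bddBelow P L hβ0) (S_nonempty P L hL hβ1)).mp
      (show sInf {x : ℝ | G P L x ≤ ENNReal.ofReal (1 - β)} < q P L β + ε from
        lt_add_of_pos_right _ hε)
    exact le_trans ((G_antitone P L) hxlt.le) hx
  · intro h
    exact csInf_le (S_bddBelow P L hβ0) h

lemma q_mono (hL : AEMeasurable L P) {β₁ β₂ : ℝ} (h0 : 0 < β₁) (h12 : β₁ ≤ β₂) (h2 : β₂ < 1) :
    q P L β₁ ≤ q P L β₂ := by
  apply csInf_le_csInf (S_bddBelow P L h0) (S_nonempty P L hL h2)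
  intro x hx
  exact le_trans hx (ENNReal.ofReal_le_ofReal (by linarith))

lemma mono_q_on (hL : AEMeasurable L P) {γ : ℝ} (hγ : γ ∈ Set.Ioo (0:ℝ) 1) :
    MonotoneOn (q P L) (Ioo γ 1) := fun a ha b hb hab =>
  q_mono P L hL (lt_trans hγ.1 ha.1) hab hb.2

lemma meas_Ioo_inter (hL : AEMeasurable L P) {γ : ℝ} (hγ : γ ∈ Set.Ioo (0:ℝ) 1) (t : ℝ) :
    Ioo γ 1 ∩ {β | t < q P L β} = Ioo (max γ (1 - (G P L t).toReal)) 1 := by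
  ext β
  simp only [mem_inter_iff, mem_Ioo, mem_setOf_eq, max_lt_iff]
  constructor
  · rintro ⟨⟨h1, h2⟩, h3⟩
    refine ⟨⟨h1, ?_⟩, h2⟩
    have hnot : ¬ q P L β ≤ t := not_le.mpr h3
    rw [q_le_iff P L hL (lt_trans hγ.1 h1) h2] at hnot
    have := (ENNReal.ofReal_lt_iff_lt_toReal (by linarith) (G_ne_top P L t)).mp (not_le.mp hnot)
    linarith
  · rintro ⟨⟨h1, h4⟩, h2⟩
    refine ⟨⟨h1, h2⟩, ?_⟩
    rw [← not_le, q_le_iff P L hL (lt_trans hγ.1 h1) h2, not_le]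
    rw [ENNReal.ofReal_lt_iff_lt_toReal (by linarith) (G_ne_top P L t)]
    linarith

lemma J_shift (α : ℝ) :
    ∫⁻ s in Ioi (0:ℝ), G P L (α + s) = ∫⁻ t in Ioi α, G P L t := by
  have h := (measurePreserving_add_left (volume : Measure ℝ) α).setLIntegral_comp_emb
    (MeasurableEquiv.addLeft α).measurableEmbedding (G P L) (Ioi 0)
  have himg : (fun x => α + x) '' (Ioi (0:ℝ)) = Ioi α := by
    ext t; simp only [mem_image, mem_Ioi]
    constructor
    · rintro ⟨s, hs, rfl⟩; linarith
    · intro ht; exact ⟨t - α, by linarith, by ring⟩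
  rw [himg] at h
  exact h

lemma LC1 (hL : AEMeasurable L P) (α : ℝ) :
    ∫⁻ ω, ENNReal.ofReal (max (L ω - α) 0) ∂P = ∫⁻ t in Ioi α, G P L t := by
  have hnn : (0 : Ω → ℝ) ≤ᵐ[P] fun ω => max (L ω - α) 0 :=
    Filter.Eventually.of_forall fun ω => le_max_right _ _
  rw [lintegral_eq_lintegral_meas_lt (f := fun ω => max (L ω - α) 0) P hnn
    ((hL.sub aemeasurable_const).max aemeasurable_const)]
  rw [← J_shift P L α]
  apply setLIntegral_congr_fun measurableSet_Ioi
  intro s hs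
  beta_reduce
  have : {ω | s < max (L ω - α) 0} = {ω | α + s < L ω} := by
    ext ω; simp only [mem_setOf_eq, lt_max_iff]
    constructor
    · rintro (h | h)
      · linarith
      · exact absurd h (lt_asymm hs)
    · intro h; left; linarith
  rw [this]; rfl

lemma Jfin (hL : AEMeasurable L P) (hLi : Integrable L P) (α : ℝ) :
    ∫⁻ t in Ioi α, G P L t ≠ ⊤ := by
  rw [← LC1 P L hL α]
  have hint : Integrable (fun ω => max (L ω - α) 0) P :=
    (hLi.sub (integrable_const α)).pos_part
  have hfin := hint.hasFiniteIntegral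
  have hnn : (0 : Ω → ℝ) ≤ᵐ[P] fun ω => max (L ω - α) 0 :=
    Filter.Eventually.of_forall fun ω => le_max_right _ _
  rw [hasFiniteIntegral_iff_ofReal hnn] at hfin
  exact hfin.ne

lemma LC3 (hL : AEMeasurable L P) {γ : ℝ} (hγ : γ ∈ Set.Ioo (0:ℝ) 1) (α : ℝ) :
    ∫⁻ β in Ioo γ 1, ENNReal.ofReal (q P L β - α) ≤ ∫⁻ t in Ioi α, G P L t := by
  have hmble : AEMeasurable (fun β => q P L β - α) (volume.restrict (Ioo γ 1)) :=
    (aemeasurable_restrict_of_monotoneOn measurableSet_Ioo (mono_q_on P L hL hγ)).sub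
      aemeasurable_const
  have hnn : (0 : ℝ → ℝ) ≤ᵐ[volume.restrict (Ioo γ 1)] fun β => max (q P L β - α) 0 :=
    Filter.Eventually.of_forall fun β => le_max_right _ _
  calc ∫⁻ β in Ioo γ 1, ENNReal.ofReal (q P L β - α)
      = ∫⁻ β in Ioo γ 1, ENNReal.ofReal (max (q P L β - α) 0) := by
        apply lintegral_congr; intro β
        rcases le_total (q P L β - α) 0 with h | h
        · rw [ENNReal.ofReal_of_nonpos h, max_eq_right h, ENNReal.ofReal_zero]
        · rw [max_eq_left h]
    _ = ∫⁻ s in Ioi (0:ℝ), volume.restrict (Ioo γ 1) {β | s < max (q P L β - α) 0} :=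
        lintegral_eq_lintegral_meas_lt (f := fun β => max (q P L β - α) 0) _ hnn
          (hmble.max aemeasurable_const)
    _ ≤ ∫⁻ s in Ioi (0:ℝ), G P L (α + s) := by
        apply setLIntegral_mono' measurableSet_Ioi
        intro s hs
        rw [Measure.restrict_apply' measurableSet_Ioo]
        have hset : {β | s < max (q P L β - α) 0} ∩ Ioo γ 1
            = Ioo γ 1 ∩ {β | (α + s) < q P L β} := by
          rw [inter_comm]
          apply congrArg (Ioo γ 1 ∩ ·)
          ext β; simp only [mem_setOf_eq, lt_max_iff]
          constructor
          · rintro (h | h)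
            · linarith
            · exact absurd h (lt_asymm hs)
          · intro h; left; linarith
        rw [hset, meas_Ioo_inter P L hL hγ, Real.volume_Ioo]
        calc ENNReal.ofReal (1 - max γ (1 - (G P L (α + s)).toReal))
            ≤ ENNReal.ofReal (1 - (1 - (G P L (α + s)).toReal)) :=
              ENNReal.ofReal_le_ofReal (sub_le_sub_left (le_max_right _ _) 1)
          _ = G P L (α + s) := by
              rw [show 1 - (1 - (G P L (α + s)).toReal) = (G P L (α + s)).toReal by ring,
                ENNReal.ofReal_toReal (G_ne_top P L _)]
    _ = ∫⁻ t in Ioi α, G P L t := J_shift P L α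

lemma LC2 (hL : AEMeasurable L P) {γ : ℝ} (hγ : γ ∈ Set.Ioo (0:ℝ) 1) :
    ∫⁻ β in Ioo γ 1, ENNReal.ofReal (q P L β - q P L γ)
      = ∫⁻ t in Ioi (q P L γ), G P L t := by
  set α := q P L γ with hα
  have hmble : AEMeasurable (fun β => q P L β - α) (volume.restrict (Ioo γ 1)) :=
    (aemeasurable_restrict_of_monotoneOn measurableSet_Ioo (mono_q_on P L hL hγ)).sub
      aemeasurable_const
  have hnn : (0 : ℝ → ℝ) ≤ᵐ[volume.restrict (Ioo γ 1)] fun β => q P L β - α :=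
    (ae_restrict_iff' measurableSet_Ioo).2 (Filter.Eventually.of_forall fun β hβ =>
      sub_nonneg.mpr (q_mono P L hL hγ.1 hβ.1.le hβ.2))
  rw [lintegral_eq_lintegral_meas_lt (f := fun β => q P L β - α) _ hnn hmble, ← J_shift P L α]
  apply setLIntegral_congr_fun measurableSet_Ioi
  intro s hs
  beta_reduce
  rw [Measure.restrict_apply' measurableSet_Ioo]
  have hset : {β | s < q P L β - α} ∩ Ioo γ 1 = Ioo γ 1 ∩ {β | (α + s) < q P L β} := by
    rw [inter_comm]
    apply congrArg (Ioo γ 1 ∩ ·)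
    ext β; simp only [mem_setOf_eq]
    constructor <;> intro h <;> linarith
  rw [hset, meas_Ioo_inter P L hL hγ, Real.volume_Ioo]
  have hle : G P L (α + s) ≤ ENNReal.ofReal (1 - γ) := by
    rw [← q_le_iff P L hL hγ.1 hγ.2]
    linarith [le_of_lt (mem_Ioi.mp hs)]
  have htr : (G P L (α + s)).toReal ≤ 1 - γ :=
    ENNReal.toReal_le_of_le_ofReal (by linarith [hγ.2]) hle
  rw [max_eq_right (by linarith)]
  rw [show 1 - (1 - (G P L (α + s)).toReal) = (G P L (α + s)).toReal by ring,
    ENNReal.ofReal_toReal (G_ne_top P L _)]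

lemma q_sub_integrableOn (hL : AEMeasurable L P) (hLi : Integrable L P)
    {γ : ℝ} (hγ : γ ∈ Set.Ioo (0:ℝ) 1) (α : ℝ) :
    IntegrableOn (fun β => q P L β - α) (Ioo γ 1) volume := by
  have hmble : AEMeasurable (fun β => q P L β - α) (volume.restrict (Ioo γ 1)) :=
    (aemeasurable_restrict_of_monotoneOn measurableSet_Ioo (mono_q_on P L hL hγ)).sub
      aemeasurable_const
  have hbase : IntegrableOn (fun β => q P L β - q P L γ) (Ioo γ 1) volume := by
    refine ⟨((aemeasurable_restrict_of_monotoneOn measurableSet_Ioo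
      (mono_q_on P L hL hγ)).sub aemeasurable_const).aestronglyMeasurable, ?_⟩
    have hnn : (0 : ℝ → ℝ) ≤ᵐ[volume.restrict (Ioo γ 1)] fun β => q P L β - q P L γ :=
      (ae_restrict_iff' measurableSet_Ioo).2 (Filter.Eventually.of_forall fun β hβ =>
        sub_nonneg.mpr (q_mono P L hL hγ.1 hβ.1.le hβ.2))
    rw [hasFiniteIntegral_iff_ofReal hnn, LC2 P L hL hγ]
    exact (Jfin P L hL hLi _).lt_top
  have hconst : IntegrableOn (fun _ : ℝ => q P L γ - α) (Ioo γ 1) volume :=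
    integrableOn_const measure_Ioo_lt_top.ne
  have h2 := hbase.add hconst
  have h3 : (fun β => q P L β - α)
      = (fun β => q P L β - q P L γ) + fun _ : ℝ => q P L γ - α := by
    funext β; simp
  rw [h3]
  exact h2

end RUaux

/-- Value-at-risk of the return `X` at confidence level `β`:
`VaR_β(X) = inf {x ∈ ℝ : ℙ(x + X < 0) ≤ 1 - β}`. -/
noncomputable def VaR {Ω : Type*} [MeasurableSpace Ω] (P : Measure Ω) (X : Ω → ℝ) (β : ℝ) : ℝ :=
  sInf {x : ℝ | (P {ω | x + X ω < 0}).toReal ≤ 1 - β}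

/-- Conditional value-at-risk of the return `X` at confidence level `γ`:
`CVaR_γ(X) = (1/(1-γ)) ∫_γ^1 VaR_β(X) dβ`. -/
noncomputable def CVaR {Ω : Type*} [MeasurableSpace Ω] (P : Measure Ω) (X : Ω → ℝ) (γ : ℝ) : ℝ :=
  (1 / (1 - γ)) * ∫ β in γ..1, VaR P X β

open Set ENNReal in
/-- Rockafellar–Uryasev representation of CVaR:
`CVaR_γ(X) = min_{α ∈ ℝ} (α + (1/(1-γ)) · E[max(-X - α, 0)])`, the minimum being attained. -/
theorem CVaR_eq_min_RU {Ω : Type*} [MeasurableSpace Ω]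
    (P : Measure Ω) [IsProbabilityMeasure P] (X : Ω → ℝ) (hX : Integrable X P)
    (γ : ℝ) (hγ : γ ∈ Set.Ioo (0 : ℝ) 1) :
    IsLeast (Set.range fun α : ℝ => α + (1 / (1 - γ)) * ∫ ω, max (-X ω - α) 0 ∂P)
      (CVaR P X γ) := by
  obtain ⟨hγ0, hγ1⟩ := hγ
  have hc : (0:ℝ) < 1 - γ := by linarith
  set L : Ω → ℝ := fun ω => -X ω with hLdef
  have hL : AEMeasurable L P := hX.aemeasurable.neg
  have hLi : Integrable L P := hX.neg
  set α₀ : ℝ := RUaux.q P L γ with hα₀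
  have hA : ∀ α : ℝ, ∫ ω, max (-X ω - α) 0 ∂P
      = (∫⁻ t in Set.Ioi α, RUaux.G P L t).toReal := by
    intro α
    have hnn : (0:Ω→ℝ) ≤ᵐ[P] fun ω => max (L ω - α) 0 :=
      Filter.Eventually.of_forall fun ω => le_max_right _ _
    have hsm : AEStronglyMeasurable (fun ω => max (L ω - α) 0) P :=
      ((hL.sub aemeasurable_const).max aemeasurable_const).aestronglyMeasurable
    have h := integral_eq_lintegral_of_nonneg_ae hnn hsm
    rw [show (fun ω => max (-X ω - α) 0) = fun ω => max (L ω - α) 0 from rfl, h,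
      RUaux.LC1 P L hL α]
  have hVaR : ∀ β ∈ Set.Ioc γ 1, VaR P X β = RUaux.q P L β := by
    intro β hβ
    unfold VaR RUaux.q
    congr 1
    ext x
    have hset : {ω | x + X ω < 0} = {ω | x < L ω} := by
      ext ω; simp only [Set.mem_setOf_eq, hLdef]
      constructor <;> intro h <;> linarith
    simp only [Set.mem_setOf_eq, hset]
    exact (ENNReal.le_ofReal_iff_toReal_le (measure_ne_top P _) (by linarith [hβ.2])).symm
  have hCV : CVaR P X γ = (1/(1-γ)) * ∫ β in Set.Ioo γ 1, RUaux.q P L β := by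
    rw [CVaR, intervalIntegral.integral_of_le (by linarith : γ ≤ 1),
      setIntegral_congr_fun measurableSet_Ioc (fun β hβ => hVaR β hβ),
      integral_Ioc_eq_integral_Ioo]
  have hqint : IntegrableOn (RUaux.q P L) (Set.Ioo γ 1) volume := by
    have h0 := RUaux.q_sub_integrableOn P L hL hLi ⟨hγ0,hγ1⟩ 0
    simpa using h0
  have hsub : ∀ α : ℝ, ∫ β in Set.Ioo γ 1, (RUaux.q P L β - α) ∂volume
      = (∫ β in Set.Ioo γ 1, RUaux.q P L β) - (1-γ)*α := by
    intro α
    rw [integral_sub hqint (integrableOn_const measure_Ioo_lt_top.ne),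
      setIntegral_const, Real.volume_real_Ioo_of_le (by linarith), smul_eq_mul]
  have hEq : ∫ β in Set.Ioo γ 1, (RUaux.q P L β - α₀) ∂volume
      = (∫⁻ t in Set.Ioi α₀, RUaux.G P L t).toReal := by
    have hnn : (0:ℝ→ℝ) ≤ᵐ[volume.restrict (Set.Ioo γ 1)] fun β => RUaux.q P L β - α₀ :=
      (ae_restrict_iff' measurableSet_Ioo).2 (Filter.Eventually.of_forall fun β hβ =>
        sub_nonneg.mpr (RUaux.q_mono P L hL hγ0 hβ.1.le hβ.2))
    rw [integral_eq_lintegral_of_nonneg_ae hnn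
      (RUaux.q_sub_integrableOn P L hL hLi ⟨hγ0,hγ1⟩ α₀).aestronglyMeasurable,
      RUaux.LC2 P L hL ⟨hγ0,hγ1⟩]
  have hIq : ∫ β in Set.Ioo γ 1, RUaux.q P L β
      = (∫⁻ t in Set.Ioi α₀, RUaux.G P L t).toReal + (1-γ)*α₀ := by
    have := hsub α₀
    rw [hEq] at this
    linarith
  constructor
  · refine ⟨α₀, ?_⟩
    show α₀ + 1 / (1 - γ) * ∫ ω, max (-X ω - α₀) 0 ∂P = CVaR P X γ
    rw [hA α₀, hCV, hIq]
    field_simp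
    ring
  · rintro y ⟨α, rfl⟩
    show CVaR P X γ ≤ α + 1 / (1 - γ) * ∫ ω, max (-X ω - α) 0 ∂P
    have h1 : ∫ β in Set.Ioo γ 1, (RUaux.q P L β - α) ∂volume
        ≤ (∫⁻ t in Set.Ioi α, RUaux.G P L t).toReal := by
      have hqa := RUaux.q_sub_integrableOn P L hL hLi ⟨hγ0,hγ1⟩ α
      have hmax : IntegrableOn (fun β => max (RUaux.q P L β - α) 0) (Set.Ioo γ 1) volume :=
        hqa.pos_part
      have h2 : ∫ β in Set.Ioo γ 1, (RUaux.q P L β - α) ∂volume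
          ≤ ∫ β in Set.Ioo γ 1, max (RUaux.q P L β - α) 0 ∂volume :=
        integral_mono hqa hmax (fun β => le_max_left _ _)
      have hnn : (0:ℝ→ℝ) ≤ᵐ[volume.restrict (Set.Ioo γ 1)]
          fun β => max (RUaux.q P L β - α) 0 :=
        Filter.Eventually.of_forall fun β => le_max_right _ _
      rw [integral_eq_lintegral_of_nonneg_ae hnn hmax.aestronglyMeasurable] at h2
      refine le_trans h2 ?_
      have h3 : ∫⁻ β in Set.Ioo γ 1, ENNReal.ofReal (max (RUaux.q P L β - α) 0)
          = ∫⁻ β in Set.Ioo γ 1, ENNReal.ofReal (RUaux.q P L β - α) := by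
        apply lintegral_congr; intro β
        rcases le_total (RUaux.q P L β - α) 0 with h|h
        · rw [max_eq_right h, ENNReal.ofReal_zero, ENNReal.ofReal_of_nonpos h]
        · rw [max_eq_left h]
      rw [h3]
      exact ENNReal.toReal_mono (RUaux.Jfin P L hL hLi α) (RUaux.LC3 P L hL ⟨hγ0,hγ1⟩ α)
    rw [hCV, hA α]
    rw [hsub α] at h1
    set J : ℝ := (∫⁻ t in Set.Ioi α, RUaux.G P L t).toReal with hJ
    have h5 : ∫ β in Set.Ioo γ 1, RUaux.q P L β ≤ (1-γ)*α + J := by linarith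
    calc (1/(1-γ)) * ∫ β in Set.Ioo γ 1, RUaux.q P L β
        ≤ (1/(1-γ)) * ((1-γ)*α + J) :=
          mul_le_mul_of_nonneg_left h5 (by positivity)
      _ = α + (1/(1-γ)) * J := by field_simp
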